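/- Let $\mathcal{J}:\mathbb{R}_+^k\to[0,\infty)$ be lower semicontinuous, componentwise nondecreasing, and positively $\alpha$-homogeneous for some $\alpha\in(0,1)$. Define $\mathcal{I}_\mathcal{J}(\bt):=\min\{\sum_{r=1}^k\mathcal{J}(\bt^{(r)}): \bt^{(r)}\in\mathbb{R}_+^k,\ \sum_{r=1}^k\bt^{(r)}=\bt\}$. Then for every $\bt\in\mathbb{R}_+^k$, $\mathcal{I}_\mathcal{J}(\bt) = \min_{m\in\mathbb{N}}\inf\{\sum_{r=1}^m\mathcal{J}(\bt^{(r)}): \bt^{(r)}\in\mathbb{R}_+^k,\ \sum_{r=1}^m\bt^{(r)}\ge\bt\}$; i.e., allowing arbitrarily many summands and only a componentwise inequality constraint does not decrease the infimum below the value achieved with exactly $k$ summands summing exactly to $\bt$. -/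

import Mathlib

open Filter Real Set

private lemma J_zero' {k : ℕ} {α : ℝ} (hα : 0 < α) {J : (Fin k → ℝ) → ℝ}
    (hJhom : ∀ l : ℝ, 0 < l → ∀ x : Fin k → ℝ, (∀ i, 0 ≤ x i) →
      J (fun i => l * x i) = l ^ α * J x) : J 0 = 0 := by
  have h := hJhom 2 (by norm_num) 0 (fun i => le_refl 0)
  have h2 : (fun i : Fin k => (2:ℝ) * (0 : Fin k → ℝ) i) = (0 : Fin k → ℝ) := by
    funext i; simp
  rw [h2] at h
  have h3 : (1:ℝ) < 2 ^ α :=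
    (Real.one_lt_rpow_iff_of_pos (by norm_num)).2 (Or.inl ⟨one_lt_two, hα⟩)
  nlinarith [h, h3]

private lemma pad_sum' {M : Type*} [AddCommMonoid M] {m k : ℕ} (hmk : m ≤ k) (F : ℕ → M)
    (hF : ∀ n, m ≤ n → F n = 0) :
    ∑ r : Fin k, F r = ∑ r : Fin m, F r := by
  rw [Fin.sum_univ_eq_sum_range F k, Fin.sum_univ_eq_sum_range F m]
  exact (Finset.sum_subset (Finset.range_subset_range.2 hmk)
    (fun n _ hn => hF n (by simpa using hn))).symm

private lemma key_lemma (k : ℕ) (α : ℝ) (hα : α ∈ Set.Ioo (0:ℝ) 1)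
    (J : (Fin k → ℝ) → ℝ)
    (hJnn : ∀ x, 0 ≤ J x)
    (hJmono : ∀ x y : Fin k → ℝ, (∀ i, 0 ≤ x i) → (∀ i, x i ≤ y i) → J x ≤ J y)
    (hJhom : ∀ l : ℝ, 0 < l → ∀ x : Fin k → ℝ, (∀ i, 0 ≤ x i) →
      J (fun i => l * x i) = l ^ α * J x)
    (t : Fin k → ℝ) :
    ∀ m (f : Fin m → Fin k → ℝ), (∀ r i, 0 ≤ f r i) → (∀ i, ∑ r, f r i = t i) →
    sInf {v : ℝ | ∃ f : Fin k → Fin k → ℝ,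
        (∀ r i, 0 ≤ f r i) ∧ (∀ i, ∑ r, f r i = t i) ∧ v = ∑ r, J (f r)}
      ≤ ∑ r, J (f r) := by
  have hJ0 : J 0 = 0 := J_zero' hα.1 hJhom
  set A : Set ℝ := {v : ℝ | ∃ f : Fin k → Fin k → ℝ,
      (∀ r i, 0 ≤ f r i) ∧ (∀ i, ∑ r, f r i = t i) ∧ v = ∑ r, J (f r)} with hA
  have hbdd : BddBelow A := by
    refine ⟨0, fun v hv => ?_⟩
    obtain ⟨g, _, _, rfl⟩ := hv
    exact Finset.sum_nonneg fun r _ => hJnn _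
  intro m
  induction m using Nat.strong_induction_on with
  | _ m IH =>
    intro f hf hsum
    rcases le_or_gt m k with hm | hm
    · -- pad with zeros up to k summands
      classical
      set fe : ℕ → (Fin k → ℝ) := fun n => if h : n < m then f ⟨n, h⟩ else 0 with hfe
      have hfe0 : ∀ n, m ≤ n → fe n = 0 := fun n hn => dif_neg (by omega)
      have hfe_lt : ∀ (r : Fin m), fe r = f r := fun r => by
        simp [hfe, r.isLt]
      refine csInf_le hbdd ?_
      refine ⟨fun r => fe r, ?_, ?_, ?_⟩
      · intro r i
        by_cases h : (r : ℕ) < m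
        · rw [hfe]; simp only [dif_pos h]; exact hf _ i
        · rw [hfe]; simp only [dif_neg h]; simp
      · intro i
        have := pad_sum' hm (fun n => fe n i)
          (fun n hn => show fe n i = 0 by rw [hfe0 n hn]; rfl)
        rw [this, ← hsum i]
        exact Finset.sum_congr rfl fun (r : Fin m) _ =>
          show fe r i = f r i by rw [hfe_lt r]
      · have := pad_sum' hm (fun n => J (fe n))
          (fun n hn => show J (fe n) = 0 by rw [hfe0 n hn, hJ0])
        rw [this]
        exact (Finset.sum_congr rfl fun (r : Fin m) _ =>
          show J (fe r) = J (f r) by rw [hfe_lt r]).symm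
    · -- m > k : reduce the number of summands
      obtain ⟨m', rfl⟩ : ∃ m', m = m' + 1 := ⟨m - 1, by omega⟩
      -- helper: drop a zero summand
      have drop : ∀ g : Fin (m' + 1) → Fin k → ℝ, (∀ r i, 0 ≤ g r i) →
          (∀ i, ∑ r, g r i = t i) → (∃ r0, g r0 = 0) → sInf A ≤ ∑ r, J (g r) := by
        intro g hg hgsum ⟨r0, hr0⟩
        have h1 : ∀ i, ∑ j : Fin m', g (r0.succAbove j) i = t i := by
          intro i
          have := Fin.sum_univ_succAbove (fun r => g r i) r0
          rw [hgsum i, hr0] at this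
          simpa using this.symm
        have h2 := IH m' (by omega) (fun j => g (r0.succAbove j)) (fun j i => hg _ i) h1
        calc sInf A ≤ ∑ j : Fin m', J (g (r0.succAbove j)) := h2
          _ = ∑ r, J (g r) := by
              rw [Fin.sum_univ_succAbove (fun r => J (g r)) r0, hr0, hJ0, zero_add]
      by_cases hzero : ∃ r0, f r0 = 0
      · exact drop f hf hsum hzero
      push_neg at hzero
      -- linear dependence
      have hdep : ¬ LinearIndependent ℝ f := by
        intro h
        have := h.fintype_card_le_finrank
        simp [Module.finrank_fin_fun] at this
        omega
      obtain ⟨c, hcsum, r1, hr1⟩ := Fintype.not_linearIndependent_iff.1 hdep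
      -- existence of a negative endpoint zeroing some summand
      have hex : ∀ c : Fin (m' + 1) → ℝ, (∃ r, 0 < c r) →
          ∃ a : ℝ, a < 0 ∧ (∀ r, 0 ≤ 1 + a * c r) ∧ ∃ rs, 1 + a * c rs = 0 := by
        intro c ⟨rp, hrp⟩
        obtain ⟨rs, -, hrs⟩ := Finset.exists_mem_eq_sup' Finset.univ_nonempty c
        have hM : 0 < c rs :=
          lt_of_lt_of_le hrp (by rw [← hrs]; exact Finset.le_sup' c (Finset.mem_univ rp))
        refine ⟨-(c rs)⁻¹, by simp [hM], ?_, rs, by field_simp; norm_num⟩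
        intro r
        have hle : c r ≤ c rs := by rw [← hrs]; exact Finset.le_sup' c (Finset.mem_univ r)
        have h1 : c r * (c rs)⁻¹ ≤ c rs * (c rs)⁻¹ :=
          mul_le_mul_of_nonneg_right hle (by positivity)
        rw [mul_inv_cancel₀ hM.ne'] at h1
        nlinarith
      -- main claim assuming some positive coefficient
      have main : ∀ c : Fin (m' + 1) → ℝ, (∑ r, c r • f r = 0) → (∃ r, 0 < c r) →
          sInf A ≤ ∑ r, J (f r) := by
        intro c hcsum hcpos
        have hcoord : ∀ i, ∑ r, c r * f r i = 0 := by
          intro i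
          have := congrFun hcsum i
          simpa using this
        obtain ⟨a, ha_neg, ha_nonneg, rs, ha_rs⟩ := hex c hcpos
        -- the rescaled family at parameter e
        have gsum : ∀ e : ℝ, ∀ i, ∑ r, (1 + e * c r) * f r i = t i := by
          intro e i
          have h' : ∀ r : Fin (m' + 1), (1 + e * c r) * f r i
              = f r i + e * (c r * f r i) := by intro r; ring
          rw [Finset.sum_congr rfl fun r _ => h' r, Finset.sum_add_distrib,
            ← Finset.mul_sum, hcoord i, hsum i, mul_zero, add_zero]
        have gcost : ∀ e : ℝ, (∀ r, 0 ≤ 1 + e * c r) → ∀ r : Fin (m' + 1),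
            J (fun i => (1 + e * c r) * f r i) = (1 + e * c r) ^ α * J (f r) := by
          intro e he r
          rcases eq_or_lt_of_le (he r) with h | h
          · rw [← h]
            have h0 : (fun i => (0:ℝ) * f r i) = (0 : Fin k → ℝ) := by funext i; simp
            rw [h0, hJ0, Real.zero_rpow hα.1.ne', zero_mul]
          · exact hJhom _ h (f r) (fun i => hf r i)
        have endpoint : ∀ e : ℝ, (∀ r, 0 ≤ 1 + e * c r) → (∃ r0, 1 + e * c r0 = 0) →
            sInf A ≤ ∑ r, (1 + e * c r) ^ α * J (f r) := by
          intro e he ⟨r0, hr0⟩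
          have hz : (fun i => (1 + e * c r0) * f r0 i) = (0 : Fin k → ℝ) := by
            funext i; rw [hr0]; simp
          have hd := drop (fun r => fun i => (1 + e * c r) * f r i)
            (fun r i => mul_nonneg (he r) (hf r i)) (gsum e) ⟨r0, hz⟩
          calc sInf A ≤ ∑ r, J (fun i => (1 + e * c r) * f r i) := hd
            _ = ∑ r, (1 + e * c r) ^ α * J (f r) :=
                Finset.sum_congr rfl fun r _ => gcost e he r
        by_cases hneg : ∃ r, c r < 0
        · -- both endpoints finite, use concavity
          obtain ⟨rn, hrn⟩ := hneg
          obtain ⟨b', hb'_neg, hb'_nonneg, rt, hb'_rt⟩ :=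
            hex (fun r => -(c r)) ⟨rn, show (0:ℝ) < -(c rn) from neg_pos.2 hrn⟩
          -- b := -b' is a positive endpoint
          obtain ⟨b, hb_pos, hb_nonneg, hb_rt⟩ :
              ∃ b : ℝ, 0 < b ∧ (∀ r, 0 ≤ 1 + b * c r) ∧ 1 + b * c rt = 0 := by
            refine ⟨-b', by linarith, fun r => ?_, ?_⟩
            · have := hb'_nonneg r; nlinarith
            · nlinarith [hb'_rt]
          obtain ⟨la, lb, hla, hlb, hlab, hab0⟩ :
              ∃ la lb : ℝ, 0 ≤ la ∧ 0 ≤ lb ∧ la + lb = 1 ∧ la * a + lb * b = 0 := by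
            have hba : 0 < b - a := by linarith
            refine ⟨b / (b - a), -a / (b - a),
              div_nonneg hb_pos.le hba.le, div_nonneg (by linarith) hba.le, ?_, ?_⟩
            · field_simp; ring
            · field_simp; ring
          -- per-term concavity
          have conc : ∀ r : Fin (m' + 1),
              la * (1 + a * c r) ^ α + lb * (1 + b * c r) ^ α ≤ 1 := by
            intro r
            have h1 : la * (1 + a * c r) + lb * (1 + b * c r) = 1 := by
              have h2 : la * (1 + a * c r) + lb * (1 + b * c r)
                  = (la + lb) + (la * a + lb * b) * c r := by ring
              rw [h2, hlab, hab0]; ring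
            have h2 := (Real.concaveOn_rpow hα.1.le hα.2.le).2
              (Set.mem_Ici.2 (ha_nonneg r)) (Set.mem_Ici.2 (hb_nonneg r))
              hla hlb hlab
            simp only [smul_eq_mul] at h2
            rw [h1, Real.one_rpow] at h2
            exact h2
          have hcomb : la * (∑ r, (1 + a * c r) ^ α * J (f r))
              + lb * (∑ r, (1 + b * c r) ^ α * J (f r)) ≤ ∑ r, J (f r) := by
            rw [Finset.mul_sum, Finset.mul_sum, ← Finset.sum_add_distrib]
            refine Finset.sum_le_sum fun r _ => ?_
            have h3 := mul_le_mul_of_nonneg_right (conc r) (hJnn (f r))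
            nlinarith [h3]
          rcases le_total (∑ r, (1 + a * c r) ^ α * J (f r))
              (∑ r, (1 + b * c r) ^ α * J (f r)) with hle | hle
          · have h1 := endpoint a ha_nonneg ⟨rs, ha_rs⟩
            refine h1.trans ?_
            have h3 : la * (∑ r, (1 + a * c r) ^ α * J (f r))
                + lb * (∑ r, (1 + a * c r) ^ α * J (f r))
                = ∑ r, (1 + a * c r) ^ α * J (f r) := by
              rw [← add_mul, hlab, one_mul]
            linarith [hcomb, mul_nonneg hlb (sub_nonneg.2 hle), h3]
          · have h1 := endpoint b hb_nonneg ⟨rt, hb_rt⟩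
            refine h1.trans ?_
            have h3 : la * (∑ r, (1 + b * c r) ^ α * J (f r))
                + lb * (∑ r, (1 + b * c r) ^ α * J (f r))
                = ∑ r, (1 + b * c r) ^ α * J (f r) := by
              rw [← add_mul, hlab, one_mul]
            linarith [hcomb, mul_nonneg hla (sub_nonneg.2 hle), h3]
        · -- all coefficients nonnegative: endpoint a works termwise
          push_neg at hneg
          have hz : (fun i => (1 + a * c rs) * f rs i) = (0 : Fin k → ℝ) := by
            funext i; rw [ha_rs]; simp
          have hd := drop (fun r => fun i => (1 + a * c r) * f r i)
            (fun r i => mul_nonneg (ha_nonneg r) (hf r i)) (gsum a) ⟨rs, hz⟩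
          calc sInf A ≤ ∑ r, J (fun i => (1 + a * c r) * f r i) := hd
            _ ≤ ∑ r, J (f r) := by
                refine Finset.sum_le_sum fun r _ => ?_
                refine hJmono _ _ (fun i => mul_nonneg (ha_nonneg r) (hf r i)) fun i => ?_
                have hcoef_le : 1 + a * c r ≤ 1 := by
                  nlinarith [mul_nonneg (hneg r) (neg_nonneg.2 ha_neg.le)]
                calc (1 + a * c r) * f r i ≤ 1 * f r i :=
                      mul_le_mul_of_nonneg_right hcoef_le (hf r i)
                  _ = f r i := one_mul _
      rcases lt_trichotomy (c r1) 0 with h | h | h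
      · refine main (fun r => -(c r)) ?_ ⟨r1, show (0:ℝ) < -(c r1) from neg_pos.2 h⟩
        have : ∑ r, -(c r) • f r = -∑ r, c r • f r := by
          simp [neg_smul, Finset.sum_neg_distrib]
        rw [this, hcsum, neg_zero]
      · exact absurd h hr1
      · exact main c hcsum ⟨r1, h⟩

/-- For a lower semicontinuous, componentwise nondecreasing,
positively `α`-homogeneous `J : ℝ₊^k → [0,∞)`, the infimum over decompositions of `t`
into exactly `k` nonnegative summands summing to `t` equals the infimum over any number
`m ≥ 1` of nonnegative summands whose sum dominates `t` componentwise. -/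
theorem rate_function_k_summands
    (k : ℕ) (α : ℝ) (hα : α ∈ Set.Ioo (0:ℝ) 1)
    (J : (Fin k → ℝ) → ℝ)
    (hJnn : ∀ x, 0 ≤ J x)
    (hJlsc : LowerSemicontinuousOn J {x | ∀ i, 0 ≤ x i})
    (hJmono : ∀ x y : Fin k → ℝ, (∀ i, 0 ≤ x i) → (∀ i, x i ≤ y i) → J x ≤ J y)
    (hJhom : ∀ l : ℝ, 0 < l → ∀ x : Fin k → ℝ, (∀ i, 0 ≤ x i) →
      J (fun i => l * x i) = l ^ α * J x)
    (t : Fin k → ℝ) (ht : ∀ i, 0 ≤ t i) :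
    sInf {v : ℝ | ∃ f : Fin k → Fin k → ℝ,
        (∀ r i, 0 ≤ f r i) ∧ (∀ i, ∑ r, f r i = t i) ∧ v = ∑ r, J (f r)}
      = sInf {v : ℝ | ∃ (m : ℕ) (f : Fin m → Fin k → ℝ), 0 < m ∧
        (∀ r i, 0 ≤ f r i) ∧ (∀ i, t i ≤ ∑ r, f r i) ∧ v = ∑ r, J (f r)} := by
  classical
  have hJ0 : J 0 = 0 := J_zero' hα.1 hJhom
  set A : Set ℝ := {v : ℝ | ∃ f : Fin k → Fin k → ℝ,
      (∀ r i, 0 ≤ f r i) ∧ (∀ i, ∑ r, f r i = t i) ∧ v = ∑ r, J (f r)} with hA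
  set B : Set ℝ := {v : ℝ | ∃ (m : ℕ) (f : Fin m → Fin k → ℝ), 0 < m ∧
      (∀ r i, 0 ≤ f r i) ∧ (∀ i, t i ≤ ∑ r, f r i) ∧ v = ∑ r, J (f r)} with hB
  have hbddB : BddBelow B := by
    refine ⟨0, fun v hv => ?_⟩
    obtain ⟨m, g, _, _, _, rfl⟩ := hv
    exact Finset.sum_nonneg fun r _ => hJnn _
  have hBne : B.Nonempty := by
    refine ⟨∑ r : Fin 1, J ((fun _ => t) r), 1, fun _ => t, one_pos,
      fun _ i => ht i, fun i => ?_, rfl⟩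
    simp
  have hAne : A.Nonempty := by
    refine ⟨∑ r : Fin k, J ((fun r i => if r = i then t i else 0) r),
      fun r i => if r = i then t i else 0, ?_, ?_, rfl⟩
    · intro r i
      by_cases h : r = i <;> simp [h, ht i]
    · intro i
      simp
  apply le_antisymm
  · -- sInf A ≤ sInf B
    refine le_csInf hBne ?_
    rintro v ⟨m, g, hm, hg, hge, rfl⟩
    set f' : Fin m → Fin k → ℝ := fun r i =>
      if (∑ r', g r' i) = 0 then 0 else g r i * (t i / ∑ r', g r' i) with hf'
    have hSnn : ∀ i, (0:ℝ) ≤ ∑ r', g r' i := fun i =>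
      Finset.sum_nonneg fun r _ => hg r i
    have hf'nn : ∀ r i, 0 ≤ f' r i := by
      intro r i
      rw [hf']
      by_cases h0 : (∑ r', g r' i) = 0
      · simp [h0]
      · have hpos : (0:ℝ) < ∑ r', g r' i := lt_of_le_of_ne (hSnn i) (Ne.symm h0)
        simp only [if_neg h0]
        exact mul_nonneg (hg r i) (div_nonneg (ht i) hpos.le)
    have hf'le : ∀ r i, f' r i ≤ g r i := by
      intro r i
      rw [hf']
      by_cases h0 : (∑ r', g r' i) = 0
      · simp [h0, hg r i]
      · have hpos : (0:ℝ) < ∑ r', g r' i := lt_of_le_of_ne (hSnn i) (Ne.symm h0)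
        simp only [if_neg h0]
        calc g r i * (t i / ∑ r', g r' i) ≤ g r i * 1 :=
              mul_le_mul_of_nonneg_left ((div_le_one hpos).2 (hge i)) (hg r i)
          _ = g r i := mul_one _
    have hf'sum : ∀ i, ∑ r, f' r i = t i := by
      intro i
      rw [hf']
      by_cases h0 : (∑ r', g r' i) = 0
      · simp only [if_pos h0, Finset.sum_const_zero]
        have := hge i
        linarith [ht i]
      · simp only [if_neg h0]
        rw [← Finset.sum_mul, mul_div_assoc', mul_comm, mul_div_assoc,
          div_self h0, mul_one]
    have h := key_lemma k α hα J hJnn hJmono hJhom t m f' hf'nn hf'sum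
    exact h.trans (Finset.sum_le_sum fun r _ =>
      hJmono _ _ (fun i => hf'nn r i) (fun i => hf'le r i))
  · -- sInf B ≤ sInf A
    refine le_csInf hAne ?_
    rintro v ⟨g, hg, hgsum, rfl⟩
    refine csInf_le hbddB ⟨k + 1, Fin.snoc g 0, Nat.succ_pos k, ?_, ?_, ?_⟩
    · intro r i
      induction r using Fin.lastCases with
      | last => simp [Fin.snoc_last]
      | cast j => simp [Fin.snoc_castSucc]; exact hg j i
    · intro i
      rw [Fin.sum_univ_castSucc
        (f := fun r => Fin.snoc (α := fun _ => Fin k → ℝ) g 0 r i)]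
      simp only [Fin.snoc_castSucc, Fin.snoc_last, Pi.zero_apply, add_zero]
      rw [hgsum i]
    · have h2 : ∑ r : Fin (k+1), J (Fin.snoc (α := fun _ => Fin k → ℝ) g 0 r)
          = ∑ r : Fin k, J (g r) := by
        rw [Fin.sum_univ_castSucc
          (f := fun r => J (Fin.snoc (α := fun _ => Fin k → ℝ) g 0 r))]
        simp [hJ0]
      exact h2.symm
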